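/- Let (X,f) be a non-wandering dynamical system with the shadowing property. Then either (X,f) is equicontinuous or (X,f) has positive topological entropy. -/

import Mathlib

open Set Function

variable {X : Type*}

/-- A `δ`-pseudo-orbit of `f`. -/
def IsPseudoOrbit [MetricSpace X] (f : X → X) (δ : ℝ) (x : ℕ → X) : Prop :=
  ∀ n : ℕ, dist (f (x n)) (x (n + 1)) < δ

/-- `z` ε-traces the sequence `x`. -/
def Traces [MetricSpace X] (f : X → X) (ε : ℝ) (z : X) (x : ℕ → X) : Prop :=
  ∀ n : ℕ, dist (f^[n] z) (x n) < ε

/-- The shadowing property. -/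
def HasShadowing [MetricSpace X] (f : X → X) : Prop :=
  ∀ ε > (0 : ℝ), ∃ δ > (0 : ℝ), ∀ x : ℕ → X, IsPseudoOrbit f δ x → ∃ z : X, Traces f ε z x

/-- The shadowing property of the restriction of `f` to an invariant set `S`. -/
def HasShadowingOn [MetricSpace X] (f : X → X) (S : Set X) : Prop :=
  ∀ ε > (0 : ℝ), ∃ δ > (0 : ℝ), ∀ x : ℕ → X, (∀ n, x n ∈ S) → IsPseudoOrbit f δ x →
    ∃ z ∈ S, Traces f ε z x

/-- Non-wandering point. -/
def NonWanderingPt [TopologicalSpace X] (f : X → X) (x : X) : Prop :=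
  ∀ U ∈ nhds x, ∃ k : ℕ, 1 ≤ k ∧ ∃ y ∈ U, f^[k] y ∈ U

/-- The (forward) orbit of a point. -/
def orbitSet (f : X → X) (x : X) : Set X := Set.range fun n : ℕ => f^[n] x

/-- Recurrent point. -/
def RecurrentPt [TopologicalSpace X] (f : X → X) (x : X) : Prop :=
  ∀ U ∈ nhds x, ∃ k : ℕ, 1 ≤ k ∧ f^[k] x ∈ U

/-- Minimal point: every point of the orbit closure has `x` in its own orbit closure,
i.e. the orbit closure of `x` is a minimal set. -/
def MinimalPt [TopologicalSpace X] (f : X → X) (x : X) : Prop :=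
  ∀ y ∈ closure (orbitSet f x), x ∈ closure (orbitSet f y)

/-- Regularly recurrent point. -/
def RegRecPt [TopologicalSpace X] (f : X → X) (x : X) : Prop :=
  ∀ U ∈ nhds x, ∃ k : ℕ, 1 ≤ k ∧ ∀ n : ℕ, f^[k * n] x ∈ U

/-- Equicontinuity of the family of iterates of `f`. -/
def EquicontinuousMap [MetricSpace X] (f : X → X) : Prop :=
  ∀ ε > (0 : ℝ), ∃ δ > (0 : ℝ), ∀ x y : X, dist x y < δ →
    ∀ n : ℕ, dist (f^[n] x) (f^[n] y) < ε

/-- `u` is a sensitive point of the subsystem on `S`. -/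
def SensitivePtOn [MetricSpace X] (f : X → X) (S : Set X) (u : X) : Prop :=
  ∃ δ > (0 : ℝ), ∀ U ∈ nhds u, ∃ n : ℕ, ∃ a ∈ U ∩ S, ∃ b ∈ U ∩ S,
    dist (f^[n] a) (f^[n] b) > δ

/-- `u` is a sensitive point of `(X,f)`. -/
def SensitivePt [MetricSpace X] (f : X → X) (u : X) : Prop :=
  ∃ δ > (0 : ℝ), ∀ U ∈ nhds u, ∃ n : ℕ, ∃ a ∈ U, ∃ b ∈ U,
    dist (f^[n] a) (f^[n] b) > δ

/-- Topological transitivity. -/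
def TopTransitive {Y : Type*} [TopologicalSpace Y] (g : Y → Y) : Prop :=
  ∀ U V : Set Y, IsOpen U → U.Nonempty → IsOpen V → V.Nonempty →
    ∃ n : ℕ, 1 ≤ n ∧ (g^[n] '' U ∩ V).Nonempty

/-- Weak mixing: the product system is transitive. -/
def WeaklyMixing [TopologicalSpace X] (f : X → X) : Prop :=
  TopTransitive (fun p : X × X => (f p.1, f p.2))

/-- Strong mixing. -/
def StronglyMixing {Y : Type*} [TopologicalSpace Y] (g : Y → Y) : Prop :=
  ∀ U V : Set Y, IsOpen U → U.Nonempty → IsOpen V → V.Nonempty →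
    ∃ N : ℕ, ∀ n ≥ N, (g^[n] '' U ∩ V).Nonempty

/-- The shift map on the full shift over `d` symbols. -/
def shiftMap (d : ℕ) : (ℕ → Fin d) → (ℕ → Fin d) := fun x n => x (n + 1)

/-- `π` is a factor map from the subsystem `(Y, f^[m])` onto the full shift on `d` symbols. -/
def FactorOntoShift [TopologicalSpace X] (f : X → X) (m : ℕ) (Y : Set X) (d : ℕ)
    (π : X → (ℕ → Fin d)) : Prop :=
  ContinuousOn π Y ∧ π '' Y = Set.univ ∧ ∀ y ∈ Y, π (f^[m] y) = shiftMap d (π y)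



open scoped ENNReal in
/-- placeholder to open scoped notation -/
lemma _ennreal_scope_open : (0:ℝ≥0∞) = 0 := rfl

open scoped ENNReal

/-- A finite `η`-chain of length `L` from `z` to `w`. -/
def FChain [MetricSpace X] (f : X → X) (η : ℝ) (L : ℕ) (z w : X) : Prop :=
  ∃ c : ℕ → X, c 0 = z ∧ c L = w ∧ ∀ j < L, dist (f (c j)) (c (j + 1)) < η

namespace FChain

variable [MetricSpace X] {f : X → X} {η η' : ℝ} {L L' : ℕ} {z w v : X}

lemma mono (h : FChain f η L z w) (hle : η ≤ η') : FChain f η' L z w := by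
  obtain ⟨c, h0, hL, hs⟩ := h
  exact ⟨c, h0, hL, fun j hj => lt_of_lt_of_le (hs j hj) hle⟩

lemma refl_zero (f : X → X) (η : ℝ) (z : X) : FChain f η 0 z z :=
  ⟨fun _ => z, rfl, rfl, fun j hj => absurd hj (Nat.not_lt_zero j)⟩

lemma concat (h1 : FChain f η L z w) (h2 : FChain f η L' w v) :
    FChain f η (L + L') z v := by
  obtain ⟨c, hc0, hcL, hcs⟩ := h1
  obtain ⟨d, hd0, hdL, hds⟩ := h2
  refine ⟨fun j => if j < L then c j else d (j - L), ?_, ?_, ?_⟩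
  · by_cases h : 0 < L
    · simpa [h] using hc0
    · have hL0 : L = 0 := by omega
      simp only [h, if_false]
      subst hL0
      rw [Nat.sub_zero, hd0, ← hcL, hc0]
  · have : ¬ (L + L' < L) := by omega
    simp only [this, if_false, Nat.add_sub_cancel_left, hdL]
  · intro j hj
    by_cases h : j < L
    · by_cases h' : j + 1 < L
      · simpa [h, h'] using hcs j h
      · have hj1 : j + 1 = L := by omega
        have hstep := hcs j h
        rw [hj1] at hstep
        simp only [h, if_pos, h', if_false, hj1, Nat.sub_self, hd0, ← hcL, lt_irrefl,
          if_false]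
        exact hstep
    · have h' : ¬ (j + 1 < L) := by omega
      simp only [h, h', if_false]
      have : j + 1 - L = (j - L) + 1 := by omega
      rw [this]
      exact hds (j - L) (by omega)

lemma retarget {w' : X} {d : ℝ} (h : FChain f η L z w) (hL : 1 ≤ L)
    (hd : dist w w' < d) : FChain f (η + d) L z w' := by
  obtain ⟨c, hc0, hcL, hcs⟩ := h
  have hd0 : 0 ≤ d := le_of_lt (lt_of_le_of_lt dist_nonneg hd)
  refine ⟨fun j => if j = L then w' else c j, ?_, ?_, ?_⟩
  · have : (0 : ℕ) ≠ L := by omega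
    simp [this, hc0]
  · simp
  · intro j hj
    have hjL : j ≠ L := by omega
    by_cases h' : j + 1 = L
    · simp only [hjL, if_false, h', if_pos]
      calc dist (f (c j)) w' ≤ dist (f (c j)) (c (j+1)) + dist (c (j+1)) w' :=
            dist_triangle _ _ _
        _ < η + d := by
            have h1 := hcs j hj
            have h2 : c (j + 1) = w := by rw [h', hcL]
            rw [h2]
            exact add_lt_add (h2 ▸ h1) hd
    · simp only [hjL, if_false, h', if_false]
      exact lt_of_lt_of_le (hcs j hj) (by linarith)

lemma genuine (f : X → X) (hη : 0 < η) (n : ℕ) (z : X) :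
    FChain f η n z (f^[n] z) := by
  refine ⟨fun j => f^[j] z, rfl, rfl, fun j hj => ?_⟩
  rw [← Function.iterate_succ_apply' f j z]
  simpa using hη

lemma rep (h : FChain f η L z z) : ∀ k : ℕ, FChain f η (k * L) z z := by
  intro k
  induction k with
  | zero => simpa using refl_zero f η z
  | succ k ih =>
    have := ih.concat h
    rwa [show k * L + L = (k+1) * L by ring] at this

end FChain
section Aux

variable [MetricSpace X] [CompactSpace X] {f : X → X}

/-- uniform continuity modulus -/
lemma ucmod (hf : Continuous f) {η : ℝ} (hη : 0 < η) :
    ∃ θ > 0, ∀ u v : X, dist u v < θ → dist (f u) (f v) < η := by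
  have h := CompactSpace.uniformContinuous_of_continuous hf
  rw [Metric.uniformContinuous_iff] at h
  obtain ⟨δ, hδ, h⟩ := h η hη
  exact ⟨δ, hδ, fun u v huv => h huv⟩

/-- chains can be shifted: a fine chain from `z` to `w` yields a chain from `f^[n] z` to `w`. -/
lemma chain_shift (hf : Continuous f) (n : ℕ) :
    ∀ η : ℝ, 0 < η → ∃ θ > 0, θ ≤ η ∧ ∀ L z w, n + 1 ≤ L → FChain f θ L z w →
      FChain f η (L - n) (f^[n] z) w := by
  induction n with
  | zero =>
    intro η hη
    exact ⟨η, hη, le_refl η, fun L z w _ h => by simpa using h⟩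
  | succ n ih =>
    intro η hη
    obtain ⟨θ, hθ, hθη, hshift⟩ := ih η hη
    obtain ⟨ρ, hρ, hρmod⟩ := ucmod hf (half_pos hθ)
    refine ⟨min (θ/2) ρ, by positivity, le_trans (min_le_left _ _) (by linarith), ?_⟩
    intro L z w hL hc
    obtain ⟨c, hc0, hcL, hcs⟩ := hc
    -- one-step shift: a θ-chain of length L-1 from f z to w
    have hone : FChain f θ (L - 1) (f z) w := by
      refine ⟨fun j => if j = 0 then f z else c (j + 1), by simp, ?_, ?_⟩
      · have h1 : L - 1 ≠ 0 := by omega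
        simp only [h1, if_false]
        rw [show L - 1 + 1 = L by omega, hcL]
      · intro j hj
        by_cases hj0 : j = 0
        · subst hj0
          simp only [if_pos, Nat.zero_add, Nat.one_ne_zero, if_false]
          have h1 : dist (f z) (c 1) < min (θ/2) ρ := by
            have := hcs 0 (by omega); rwa [hc0] at this
          have h2 : dist (f (f z)) (f (c 1)) < θ/2 :=
            hρmod _ _ (lt_of_lt_of_le h1 (min_le_right _ _))
          have h3 : dist (f (c 1)) (c 2) < min (θ/2) ρ := hcs 1 (by omega)
          calc dist (f (f z)) (c 2) ≤ dist (f (f z)) (f (c 1)) + dist (f (c 1)) (c 2) :=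
                dist_triangle _ _ _
            _ < θ/2 + θ/2 := add_lt_add h2 (lt_of_lt_of_le h3 (min_le_left _ _))
            _ = θ := by ring
        · have hj1 : j + 1 ≠ 0 := by omega
          simp only [hj0, if_false, hj1, if_false]
          exact lt_of_lt_of_le (hcs (j+1) (by omega))
            (le_trans (min_le_left _ _) (by linarith))
    have := hshift (L - 1) (f z) w (by omega) hone
    rw [show L - 1 - n = L - (n + 1) by omega, ← Function.iterate_succ_apply] at this
    exact this

/-- every point admits short chains back to itself, of every positive length bound. -/
lemma chain_rec (hf : Continuous f)
    (hnw : ∀ x : X, ∀ U ∈ nhds x, ∃ k : ℕ, 1 ≤ k ∧ ∃ y ∈ U, f^[k] y ∈ U)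
    (x : X) {θ : ℝ} (hθ : 0 < θ) : ∃ L, 1 ≤ L ∧ FChain f θ L x x := by
  obtain ⟨ρ, hρ, hρmod⟩ := ucmod hf (half_pos hθ)
  have hU : Metric.ball x (min (θ/2) ρ) ∈ nhds x :=
    Metric.ball_mem_nhds x (by positivity)
  obtain ⟨k, hk, y, hy, hky⟩ := hnw x _ hU
  rw [Metric.mem_ball] at hy hky
  refine ⟨k, hk, fun j => if j = 0 then x else if j = k then x else f^[j] y, by simp, ?_, ?_⟩
  · have : k ≠ 0 := by omega
    simp [this]
  · intro j hj
    by_cases hj0 : j = 0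
    · subst hj0
      simp only [if_pos]
      have hfy : dist (f x) (f y) < θ/2 :=
        hρmod _ _ (lt_of_lt_of_le (by rwa [dist_comm] at hy) (min_le_right _ _))
      by_cases hk1 : k = 1
      · simp only [Nat.one_ne_zero, hk1, if_pos, if_neg, Nat.zero_add]
        rw [ite_self]
        calc dist (f x) x ≤ dist (f x) (f y) + dist (f y) x := dist_triangle _ _ _
          _ < θ/2 + θ/2 := by
              refine add_lt_add hfy ?_
              rw [hk1] at hky
              simp only [Function.iterate_one] at hky
              exact lt_of_lt_of_le hky (min_le_left _ _)
          _ = θ := by ring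
      · have h1 : (1:ℕ) ≠ 0 := one_ne_zero
        have h2 : (1:ℕ) ≠ k := by omega
        simp only [Nat.zero_add, h1, if_false, h2, if_false]
        have : f^[1] y = f y := by simp
        rw [this]
        linarith
    · have hjk : j ≠ k := by omega
      simp only [hj0, if_false, hjk, if_false]
      by_cases hj1 : j + 1 = k
      · simp only [hj1, if_pos]
        rw [ite_self, ← Function.iterate_succ_apply' f j y, Nat.succ_eq_add_one, hj1]
        exact lt_of_lt_of_le hky (le_trans (min_le_left _ _) (by linarith))
      · have hj10 : j + 1 ≠ 0 := by omega
        simp only [hj10, if_false, hj1, if_false]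
        rw [← Function.iterate_succ_apply' f j y]
        simp [hθ]

end Aux

section Block

variable [MetricSpace X] [CompactSpace X] {f : X → X}

lemma block_exists (hf : Continuous f)
    (hnw : ∀ x : X, ∀ U ∈ nhds x, ∃ k : ℕ, 1 ≤ k ∧ ∃ y ∈ U, f^[k] y ∈ U)
    {δ₀ : ℝ} (hδ₀ : 0 < δ₀) (a b : X) (hab : dist a b < δ₀/4) (n₀ : ℕ) :
    ∃ m : ℕ, n₀ < m ∧ ∃ C : Bool → Bool → ℕ → X,
      ∀ s t : Bool, C s t 0 = (if s then b else a) ∧ C s t m = (if t then b else a) ∧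
        C s t n₀ = f^[n₀] (if s then b else a) ∧
        ∀ j < m, dist (f (C s t j)) (C s t (j + 1)) < δ₀ := by
  set pt : Bool → X := fun s => if s then b else a with hpt
  obtain ⟨θ, hθ, hθle, hshift⟩ := chain_shift hf n₀ (δ₀/2) (by positivity)
  -- chain from f^[n₀] a to a
  obtain ⟨La, hLa, hca⟩ := chain_rec hf hnw a hθ
  have hcA := hshift ((n₀+1) * La) a a (by have h := Nat.mul_le_mul (le_refl (n₀+1)) hLa; omega) (hca.rep (n₀+1))
  set A := (n₀+1) * La - n₀ with hA
  have hA1 : 1 ≤ A := by have h := Nat.mul_le_mul (le_refl (n₀+1)) hLa; simp only [hA]; omega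
  obtain ⟨Lb, hLb, hcb⟩ := chain_rec hf hnw b hθ
  have hcB := hshift ((n₀+1) * Lb) b b (by have h := Nat.mul_le_mul (le_refl (n₀+1)) hLb; omega) (hcb.rep (n₀+1))
  set B := (n₀+1) * Lb - n₀ with hB
  have hB1 : 1 ≤ B := by have h := Nat.mul_le_mul (le_refl (n₀+1)) hLb; simp only [hB]; omega
  set δ' : ℝ := δ₀/2 + δ₀/4 with hδ'
  have hδ'pos : 0 < δ' := by positivity
  have hδ'lt : δ' < δ₀ := by simp only [hδ']; linarith
  -- connecting chains of length A (resp. B) from f^[n₀] a (resp. b) to either point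
  have conA : ∀ t : Bool, FChain f δ' A (f^[n₀] a) (pt t) := by
    intro t
    cases t with
    | false => exact hcA.mono (by linarith)
    | true => exact hcA.retarget hA1 hab
  have conB : ∀ t : Bool, FChain f δ' B (f^[n₀] b) (pt t) := by
    intro t
    cases t with
    | true => exact hcB.mono (by linarith)
    | false => exact hcB.retarget hB1 (by rwa [dist_comm] at hab)
  -- hops between a and b, of length P = n₀ + A from a and Q = n₀ + B from b
  have hop : ∀ s t : Bool, FChain f δ' (n₀ + (if s then B else A)) (pt s) (pt t) := by
    intro s t
    cases s with
    | false => exact (FChain.genuine f hδ'pos n₀ a).concat (conA t)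
    | true => exact (FChain.genuine f hδ'pos n₀ b).concat (conB t)
  set K := A + (n₀ + A) + ((n₀ + B) + (n₀ + B)) with hK
  have conn : ∀ s t : Bool, FChain f δ' K (f^[n₀] (pt s)) (pt t) := by
    intro s t
    cases s with
    | false =>
      have h1 := ((conA false).concat (hop false true)).concat
        ((hop true true).concat (hop true t))
      exact h1
    | true =>
      have h1 := ((conB true).concat (hop true false)).concat
        ((hop false false).concat (hop false t))
      have hlen : B + (n₀ + B) + ((n₀ + A) + (n₀ + A)) = K := by simp only [hK]; omega
      have h1' : FChain f δ' (B + (n₀ + B) + ((n₀ + A) + (n₀ + A))) (f^[n₀] b) (pt t) := by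
        simpa using h1
      rw [show pt true = b from rfl, ← hlen]
      exact h1' 
  have hK1 : 1 ≤ K := by omega
  refine ⟨n₀ + K, by omega, ?_⟩
  have hCst : ∀ s t : Bool, ∃ C : ℕ → X, C 0 = pt s ∧ C (n₀ + K) = pt t ∧
      C n₀ = f^[n₀] (pt s) ∧ ∀ j < n₀ + K, dist (f (C j)) (C (j + 1)) < δ₀ := by
    intro s t
    obtain ⟨c, hc0, hcK, hcs⟩ := conn s t
    refine ⟨fun j => if j < n₀ then f^[j] (pt s) else c (j - n₀), ?_, ?_, ?_, ?_⟩
    · by_cases h : 0 < n₀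
      · simp [h]
      · have h0 : n₀ = 0 := by omega
        simp only [h, if_false, Nat.sub_zero, hc0, h0]
        simp
    · have h : ¬ (n₀ + K < n₀) := by omega
      simp only [h, if_false, Nat.add_sub_cancel_left, hcK]
    · have h : ¬ (n₀ < n₀) := lt_irrefl n₀
      simp only [h, if_false, Nat.sub_self, hc0]
    · intro j hj
      by_cases h : j < n₀
      · have hval : (if j + 1 < n₀ then f^[j+1] (pt s) else c (j + 1 - n₀)) =
            f^[j+1] (pt s) := by
          by_cases h' : j + 1 < n₀
          · simp [h']
          · have : j + 1 = n₀ := by omega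
            simp only [h', if_false, this, Nat.sub_self, hc0, ite_self]
        simp only [h, if_pos, hval]
        rw [← Function.iterate_succ_apply' f j (pt s)]
        simp [hδ₀]
      · have h' : ¬ (j + 1 < n₀) := by omega
        simp only [h, h', if_false]
        rw [show j + 1 - n₀ = (j - n₀) + 1 by omega]
        exact lt_of_lt_of_le (hcs (j - n₀) (by omega)) (le_of_lt hδ'lt)
  choose C hC0 hCm hCn hCs using hCst
  exact ⟨C, fun s t => ⟨hC0 s t, hCm s t, hCn s t, hCs s t⟩⟩

end Block


theorem equicontinuous_or_positive_entropy [MetricSpace X] [CompactSpace X]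
    (f : X → X) (hf : Continuous f) (hnw : ∀ x : X, NonWanderingPt f x)
    (hsh : HasShadowing f) :
    EquicontinuousMap f ∨ 0 < Dynamics.coverEntropy f Set.univ := by
  by_cases hE : EquicontinuousMap f
  · exact Or.inl hE
  right
  rw [EquicontinuousMap] at hE
  push_neg at hE
  obtain ⟨ε₀, hε₀, hsen⟩ := hE
  obtain ⟨δ₀, hδ₀, htrace⟩ := hsh (ε₀/4) (by positivity)
  obtain ⟨a, b, hab, n₀, hsep⟩ := hsen (δ₀/4) (by positivity)
  obtain ⟨m, hn₀m, C, hC⟩ := block_exists hf (fun x => hnw x) hδ₀ a b hab n₀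
  have hm1 : 1 ≤ m := by omega
  have hmpos : 0 < m := hm1
  classical
  -- the family of pseudo-orbits indexed by binary sequences
  set xs : (ℕ → Bool) → ℕ → X :=
    fun s N => C (s (N / m)) (s (N / m + 1)) (N % m) with hxs
  have hpo : ∀ s, IsPseudoOrbit f δ₀ (xs s) := by
    intro s N
    have hj : N % m < m := Nat.mod_lt _ hmpos
    have hNd := Nat.div_add_mod N m
    by_cases hcase : N % m + 1 < m
    · have hN1 : N + 1 = m * (N / m) + (N % m + 1) := by omega
      have hdiv : (N + 1) / m = N / m := by
        rw [hN1, Nat.mul_add_div hmpos, Nat.div_eq_of_lt hcase, Nat.add_zero]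
      have hmod : (N + 1) % m = N % m + 1 := by
        rw [hN1, Nat.mul_add_mod, Nat.mod_eq_of_lt hcase]
      simp only [hxs, hdiv, hmod]
      exact (hC (s (N / m)) (s (N / m + 1))).2.2.2 (N % m) hj
    · have hj1 : N % m + 1 = m := by omega
      have hN1 : N + 1 = m * (N / m + 1) := by rw [Nat.mul_add, Nat.mul_one]; omega
      have hdiv : (N + 1) / m = N / m + 1 := by
        rw [hN1, Nat.mul_div_cancel_left _ hmpos]
      have hmod : (N + 1) % m = 0 := by rw [hN1, Nat.mul_mod_right]
      simp only [hxs, hdiv, hmod]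
      have hstep := (hC (s (N / m)) (s (N / m + 1))).2.2.2 (N % m) hj
      rw [hj1, (hC (s (N / m)) (s (N / m + 1))).2.1] at hstep
      rw [(hC (s (N / m + 1)) (s (N / m + 1 + 1))).1]
      exact hstep
  choose z hz using fun s => htrace (xs s) (hpo s)
  -- value of the pseudo-orbits at the distinguishing times
  have hval : ∀ (s : ℕ → Bool) (i : ℕ),
      xs s (i * m + n₀) = f^[n₀] (if s i then b else a) := by
    intro s i
    have hdiv : (i * m + n₀) / m = i := by
      rw [Nat.mul_comm, Nat.mul_add_div hmpos, Nat.div_eq_of_lt hn₀m, Nat.add_zero]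
    have hmod : (i * m + n₀) % m = n₀ := by
      rw [Nat.mul_comm, Nat.mul_add_mod, Nat.mod_eq_of_lt hn₀m]
    simp only [hxs, hdiv, hmod]
    exact (hC (s i) (s (i + 1))).2.2.1
  -- separation of traced points
  have hsepz : ∀ s t : ℕ → Bool, ∀ i : ℕ, s i ≠ t i →
      ε₀/2 ≤ dist (f^[i * m + n₀] (z s)) (f^[i * m + n₀] (z t)) := by
    intro s t i hst
    have h1 := hz s (i * m + n₀)
    have h2 := hz t (i * m + n₀)
    rw [hval s i] at h1
    rw [hval t i] at h2
    have hbig : ε₀ ≤ dist (f^[n₀] (if s i then b else a)) (f^[n₀] (if t i then b else a)) := by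
      cases hsi : s i <;> cases hti : t i
      · simp [hsi, hti] at hst
      · simpa using hsep
      · rw [dist_comm]; simpa using hsep
      · simp [hsi, hti] at hst
    have htri := dist_triangle4 (f^[n₀] (if s i then b else a)) (f^[i * m + n₀] (z s))
      (f^[i * m + n₀] (z t)) (f^[n₀] (if t i then b else a))
    have e1 := dist_comm (f^[n₀] (if s i = true then b else a)) (f^[i * m + n₀] (z s))
    linarith
  -- the entourage used to separate orbits
  set U₀ : Set (X × X) := {p | dist p.1 p.2 < ε₀/4} with hU₀def
  have hU₀ : U₀ ∈ uniformity X := Metric.dist_mem_uniformity (by positivity)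
  -- maximal net cardinality grows exponentially
  have hnet : ∀ k : ℕ, (2^k : ℕ∞) ≤ Dynamics.netMaxcard f Set.univ U₀ (k * m) := by
    intro k
    set ext : (Fin k → Bool) → (ℕ → Bool) :=
      fun σ i => if h : i < k then σ ⟨i, h⟩ else false with hext
    have hinj : Function.Injective (fun σ : Fin k → Bool => z (ext σ)) := by
      intro σ τ hzz
      have hzz' : z (ext σ) = z (ext τ) := hzz
      by_contra hne
      obtain ⟨i, hi⟩ := Function.ne_iff.1 hne
      have hdiff : ext σ i.val ≠ ext τ i.val := by
        simp only [hext, i.isLt, dif_pos, Fin.eta]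
        exact hi
      have := hsepz (ext σ) (ext τ) i.val hdiff
      rw [hzz'] at this
      simp only [dist_self] at this
      linarith
    set E : Finset X := Finset.image (fun σ : Fin k → Bool => z (ext σ)) Finset.univ with hE
    have hcard : E.card = 2^k := by
      rw [hE, Finset.card_image_of_injective _ hinj, Finset.card_univ]
      simp [Fintype.card_fun]
    have hdyn : Dynamics.IsDynNetIn f Set.univ U₀ (k * m) ↑E := by
      refine ⟨Set.subset_univ _, ?_⟩
      intro x hx y hy hxy
      simp only [hE, Finset.coe_image, Finset.coe_univ, Set.image_univ, Set.mem_range] at hx hy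
      obtain ⟨σ, rfl⟩ := hx
      obtain ⟨τ, rfl⟩ := hy
      have hστ : σ ≠ τ := fun h => hxy (by rw [h])
      obtain ⟨i, hi⟩ := Function.ne_iff.1 hστ
      have hdiff : ext σ i.val ≠ ext τ i.val := by
        simp only [hext, i.isLt, dif_pos, Fin.eta]
        exact hi
      have hsepi := hsepz (ext σ) (ext τ) i.val hdiff
      have hN : i.val * m + n₀ < k * m := by
        have : i.val + 1 ≤ k := i.isLt
        calc i.val * m + n₀ < i.val * m + m := by omega
          _ = (i.val + 1) * m := by ring
          _ ≤ k * m := Nat.mul_le_mul_right m this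
      simp only [Function.onFun]
      rw [Set.disjoint_left]
      intro w hw1 hw2
      rw [UniformSpace.ball, Set.mem_preimage, Dynamics.mem_dynEntourage] at hw1 hw2
      have h1 := hw1 (i.val * m + n₀) hN
      have h2 := hw2 (i.val * m + n₀) hN
      simp only [hU₀def, Set.mem_setOf_eq] at h1 h2
      have htri := dist_triangle (f^[i.val * m + n₀] (z (ext σ))) (f^[i.val * m + n₀] w)
        (f^[i.val * m + n₀] (z (ext τ)))
      have e2 := dist_comm (f^[i.val * m + n₀] (z (ext τ))) (f^[i.val * m + n₀] w)
      linarith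
    have := hdyn.card_le_netMaxcard
    rwa [hcard] at this
  -- conclude positivity of entropy
  set c : EReal := ((Real.log 2 / m : ℝ) : EReal) with hc
  have hmR : (0:ℝ) < (m:ℝ) := by exact_mod_cast hmpos
  have hcpos : 0 < c := by
    rw [hc]
    exact_mod_cast div_pos (Real.log_pos one_lt_two) hmR
  have hne : c ≤ Dynamics.netEntropyEntourage f Set.univ U₀ := by
    rw [Dynamics.netEntropyEntourage]
    apply Filter.le_limsup_of_frequently_le'
    rw [Filter.frequently_atTop]
    intro N
    refine ⟨(N + 1) * m, by nlinarith [Nat.one_le_iff_ne_zero.1 hm1], ?_⟩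
    set k := N + 1 with hk
    have hkpos : 0 < k := Nat.succ_pos N
    have h1 : ((2:ℝ≥0∞)^k) ≤ ((Dynamics.netMaxcard f Set.univ U₀ (k * m) : ℕ∞) : ℝ≥0∞) := by
      have := hnet k
      have h2 := ENat.toENNReal_le.2 this
      rwa [show (((2:ℕ∞)^k : ℕ∞) : ℝ≥0∞) = (2:ℝ≥0∞)^k by push_cast; ring] at h2
    have h2 : ((k * Real.log 2 : ℝ) : EReal) ≤
        ENNReal.log (Dynamics.netMaxcard f Set.univ U₀ (k * m)) := by
      have h3 := ENNReal.log_monotone h1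
      rw [ENNReal.log_pow] at h3
      have h4 : ENNReal.log 2 = ((Real.log 2 : ℝ) : EReal) := by
        rw [ENNReal.log_pos_real' (by norm_num)]
        norm_num
      rw [h4] at h3
      rwa [show ((k * Real.log 2 : ℝ) : EReal) = (k : EReal) * ((Real.log 2 : ℝ) : EReal) by
        rw [← EReal.coe_coe_eq_natCast, ← EReal.coe_mul]]
    have h5 : c ≤ ((k * Real.log 2 : ℝ) : EReal) / ((k * m : ℕ) : EReal) := by
      have hk0 : (k:ℝ) ≠ 0 := Nat.cast_ne_zero.2 (by omega)
      have hm0 : (m:ℝ) ≠ 0 := ne_of_gt hmR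
      have heq : ((k * Real.log 2 : ℝ) : EReal) / ((k * m : ℕ) : EReal) = c := by
        rw [hc, ← EReal.coe_coe_eq_natCast, div_eq_mul_inv, div_eq_mul_inv, ← EReal.coe_inv,
          ← EReal.coe_mul, EReal.coe_eq_coe_iff, ← div_eq_mul_inv, ← div_eq_mul_inv]
        push_cast
        field_simp
      rw [heq]
    refine le_trans h5 ?_
    exact EReal.div_le_div_right_of_nonneg (by exact_mod_cast Nat.zero_le (k*m)) h2
  have hfinal : Dynamics.netEntropyEntourage f Set.univ U₀ ≤ Dynamics.coverEntropy f Set.univ := by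
    rw [Dynamics.coverEntropy_eq_iSup_netEntropyEntourage]
    exact le_biSup _ hU₀
  exact lt_of_lt_of_le hcpos (le_trans hne hfinal)
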